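/- Fix λ > 0 and ρ > 0. For α > 0, set √ω_α := λρ/4 + α/2, x̄_α := (2/(λρ + 2α))·log(λρ/(λρ + 4α)), and φ_α(x) := √(2ω_α/λ)·sech(√ω_α(|x| − x̄_α)). Then, as α → 0+, ∫_ℝ |φ_α(x) − g(x)|² dx + ∫_{ℝ∖{0}} |φ_α'(x) − g'(x)|² dx → 0, where g(x) := (√λ·ρ/(2√2))·sech((λρ/4)·x); that is, φ_α converges in H¹(ℝ) to the free soliton of mass ρ. -/

import Mathlib

open MeasureTheory Real Filter Set Topology

noncomputable section

/-- sech x = 1 / cosh x -/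
def sech (x : ℝ) : ℝ := 1 / Real.cosh x

namespace NLSAux

lemma sech_pos (x : ℝ) : 0 < sech x := by
  simpa [sech] using Real.cosh_pos (x := x)

lemma sech_le_two_exp {y : ℝ} (hy : 0 ≤ y) : sech y ≤ 2 * Real.exp (-y) := by
  rw [sech, div_le_iff₀ (Real.cosh_pos y)]
  have h1 : Real.cosh y = (Real.exp y + Real.exp (-y)) / 2 := Real.cosh_eq y
  have h2 := Real.exp_pos y
  have h3 := Real.exp_pos (-y)
  have h4 : Real.exp (-y) * Real.exp y = 1 := by
    rw [← Real.exp_add]; simp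
  nlinarith

lemma abs_sinh_le_cosh (y : ℝ) : |Real.sinh y| ≤ Real.cosh y := by
  have h1 : Real.cosh y ^ 2 = Real.sinh y ^ 2 + 1 := Real.cosh_sq y
  have h2 := Real.cosh_pos (x := y)
  rw [abs_le]
  constructor <;> nlinarith

lemma hasDerivAt_sech (y : ℝ) :
    HasDerivAt sech (-(Real.sinh y / Real.cosh y ^ 2)) y := by
  have h := (Real.hasDerivAt_cosh y).inv (Real.cosh_pos (x := y)).ne'
  have hs : sech = fun x => (Real.cosh x)⁻¹ := by
    funext x; simp [sech, one_div]
  rw [hs]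
  refine h.congr_deriv ?_
  ring

/-- wave number -/
def kk (lam ρ α : ℝ) : ℝ := lam * ρ / 4 + α / 2

/-- center -/
def bb (lam ρ α : ℝ) : ℝ := (2 / (lam * ρ + 2 * α)) * Real.log (lam * ρ / (lam * ρ + 4 * α))

/-- amplitude -/
def cc (lam ρ α : ℝ) : ℝ := Real.sqrt (2 * (kk lam ρ α) ^ 2 / lam)

/-- model soliton profile -/
def model (lam ρ α x : ℝ) : ℝ := cc lam ρ α * sech (kk lam ρ α * (|x| - bb lam ρ α))

/-- derivative of the model profile away from 0 -/
def dmodel (lam ρ α x : ℝ) : ℝ :=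
  (SignType.sign x : ℝ) *
    (cc lam ρ α * ((kk lam ρ α) *
      (-(Real.sinh (kk lam ρ α * (|x| - bb lam ρ α)) /
          Real.cosh (kk lam ρ α * (|x| - bb lam ρ α)) ^ 2))))

lemma kk_pos {lam ρ : ℝ} (hlam : 0 < lam) (hρ : 0 < ρ) {α : ℝ} (hα : 0 ≤ α) :
    0 < kk lam ρ α := by
  have := mul_pos hlam hρ; unfold kk; linarith

lemma kk_mono (lam ρ : ℝ) {α β : ℝ} (h : α ≤ β) : kk lam ρ α ≤ kk lam ρ β := by
  unfold kk; linarith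

lemma bb_zero {lam ρ : ℝ} (hlam : 0 < lam) (hρ : 0 < ρ) : bb lam ρ 0 = 0 := by
  unfold bb
  have h : lam * ρ + 4 * 0 = lam * ρ := by ring
  rw [h, div_self (by positivity), Real.log_one, mul_zero]

lemma bb_nonpos {lam ρ : ℝ} (hlam : 0 < lam) (hρ : 0 < ρ) {α : ℝ} (hα : 0 ≤ α) :
    bb lam ρ α ≤ 0 := by
  have hm := mul_pos hlam hρ
  unfold bb
  apply mul_nonpos_of_nonneg_of_nonpos
  · have : (0:ℝ) < lam * ρ + 2 * α := by linarith
    positivity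
  · apply Real.log_nonpos
    · have h1 : (0:ℝ) < lam * ρ + 4 * α := by linarith
      positivity
    · rw [div_le_one (by linarith)]; linarith

lemma cc_eq {lam ρ : ℝ} (hlam : 0 < lam) (hρ : 0 < ρ) {α : ℝ} (hα : 0 ≤ α) :
    cc lam ρ α = kk lam ρ α * Real.sqrt (2 / lam) := by
  unfold cc
  rw [show 2 * (kk lam ρ α) ^ 2 / lam = (kk lam ρ α) ^ 2 * (2 / lam) by ring,
    Real.sqrt_mul (by positivity), Real.sqrt_sq (kk_pos hlam hρ hα).le]

lemma cc_nonneg (lam ρ α : ℝ) : 0 ≤ cc lam ρ α := Real.sqrt_nonneg _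

lemma cc_mono {lam ρ : ℝ} (hlam : 0 < lam) (hρ : 0 < ρ) {α β : ℝ} (hα : 0 ≤ α) (h : α ≤ β) :
    cc lam ρ α ≤ cc lam ρ β := by
  rw [cc_eq hlam hρ hα, cc_eq hlam hρ (hα.trans h)]
  exact mul_le_mul_of_nonneg_right (kk_mono lam ρ h) (Real.sqrt_nonneg _)

lemma arg_ge {lam ρ : ℝ} (hlam : 0 < lam) (hρ : 0 < ρ) {α : ℝ} (hα : 0 ≤ α) (x : ℝ) :
    lam * ρ / 4 * |x| ≤ kk lam ρ α * (|x| - bb lam ρ α) := by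
  have hkα := kk_pos hlam hρ hα (lam := lam) (ρ := ρ)
  have hb := bb_nonpos hlam hρ hα (lam := lam) (ρ := ρ)
  have h2 : lam * ρ / 4 ≤ kk lam ρ α := by unfold kk; linarith
  nlinarith [abs_nonneg x]

lemma abs_sign_le_one (x : ℝ) : |(SignType.sign x : ℝ)| ≤ 1 := by
  rcases lt_trichotomy x 0 with h|h|h <;> simp [h]

/-- pointwise exponential bound on the model -/
lemma model_bound {lam ρ : ℝ} (hlam : 0 < lam) (hρ : 0 < ρ) {α : ℝ} (hα : 0 ≤ α) (x : ℝ) :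
    |model lam ρ α x| ≤ 2 * cc lam ρ α * Real.exp (-(lam * ρ / 4 * |x|)) := by
  have harg := arg_ge hlam hρ hα x
  have hargpos : 0 ≤ kk lam ρ α * (|x| - bb lam ρ α) := le_trans (by positivity) harg
  have hs := sech_le_two_exp hargpos
  have hs2 : Real.exp (-(kk lam ρ α * (|x| - bb lam ρ α))) ≤
      Real.exp (-(lam * ρ / 4 * |x|)) := Real.exp_le_exp.2 (by linarith)
  have hmpos : 0 ≤ model lam ρ α x :=
    mul_nonneg (cc_nonneg _ _ _) (sech_pos _).le
  rw [abs_of_nonneg hmpos]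
  unfold model
  calc cc lam ρ α * sech (kk lam ρ α * (|x| - bb lam ρ α))
      ≤ cc lam ρ α * (2 * Real.exp (-(kk lam ρ α * (|x| - bb lam ρ α)))) :=
        mul_le_mul_of_nonneg_left hs (cc_nonneg _ _ _)
    _ ≤ cc lam ρ α * (2 * Real.exp (-(lam * ρ / 4 * |x|))) := by
        have := cc_nonneg lam ρ α
        nlinarith [Real.exp_pos (-(kk lam ρ α * (|x| - bb lam ρ α)))]
    _ = 2 * cc lam ρ α * Real.exp (-(lam * ρ / 4 * |x|)) := by ring

/-- pointwise exponential bound on the model derivative -/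
lemma dmodel_bound {lam ρ : ℝ} (hlam : 0 < lam) (hρ : 0 < ρ) {α : ℝ} (hα : 0 ≤ α) (x : ℝ) :
    |dmodel lam ρ α x| ≤ 2 * (cc lam ρ α * kk lam ρ α) * Real.exp (-(lam * ρ / 4 * |x|)) := by
  have hkα := kk_pos hlam hρ hα (lam := lam) (ρ := ρ)
  set θ := kk lam ρ α * (|x| - bb lam ρ α) with hθ
  have harg := arg_ge hlam hρ hα x
  have hargpos : 0 ≤ θ := le_trans (by positivity) harg
  have hcosh := Real.cosh_pos (x := θ)
  have hfrac : |Real.sinh θ| / Real.cosh θ ^ 2 ≤ 2 * Real.exp (-(lam * ρ / 4 * |x|)) := by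
    have h1 : |Real.sinh θ| / Real.cosh θ ^ 2 ≤ sech θ := by
      rw [sech, div_le_div_iff₀ (by positivity) hcosh]
      nlinarith [abs_sinh_le_cosh θ, abs_nonneg (Real.sinh θ)]
    have h2 := sech_le_two_exp hargpos
    have h3 : Real.exp (-θ) ≤ Real.exp (-(lam * ρ / 4 * |x|)) :=
      Real.exp_le_exp.2 (by linarith)
    linarith
  unfold dmodel
  rw [abs_mul, abs_mul, abs_mul, abs_neg, abs_div,
    abs_of_nonneg (cc_nonneg lam ρ α), abs_of_nonneg hkα.le,
    abs_of_nonneg (by positivity : (0:ℝ) ≤ Real.cosh θ ^ 2)]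
  calc |(SignType.sign x : ℝ)| * (cc lam ρ α * (kk lam ρ α * (|Real.sinh θ| / Real.cosh θ ^ 2)))
      ≤ 1 * (cc lam ρ α * (kk lam ρ α * (2 * Real.exp (-(lam * ρ / 4 * |x|))))) := by
        apply mul_le_mul (abs_sign_le_one x) ?_ ?_ zero_le_one
        swap
        · exact mul_nonneg (cc_nonneg _ _ _) (mul_nonneg hkα.le (by positivity))
        exact mul_le_mul_of_nonneg_left
          (mul_le_mul_of_nonneg_left hfrac hkα.le) (cc_nonneg _ _ _)
    _ = 2 * (cc lam ρ α * kk lam ρ α) * Real.exp (-(lam * ρ / 4 * |x|)) := by ring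

/-- derivative of the model away from the origin -/
lemma hasDerivAt_model (lam ρ α : ℝ) {x : ℝ} (hx : x ≠ 0) :
    HasDerivAt (fun y => model lam ρ α y) (dmodel lam ρ α x) x := by
  have h1 : HasDerivAt (fun y : ℝ => kk lam ρ α * (|y| - bb lam ρ α))
      (kk lam ρ α * (SignType.sign x : ℝ)) x :=
    ((hasDerivAt_abs hx).sub_const (bb lam ρ α)).const_mul (kk lam ρ α)
  have h2 := (hasDerivAt_sech (kk lam ρ α * (|x| - bb lam ρ α))).comp x h1
  have h3 := h2.const_mul (cc lam ρ α)
  refine h3.congr_deriv ?_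
  unfold dmodel
  ring


lemma sech_continuous : Continuous sech := by
  unfold sech
  exact continuous_const.div Real.continuous_cosh (fun x => (Real.cosh_pos x).ne')

lemma kk_continuous (lam ρ : ℝ) : Continuous (kk lam ρ) := by
  unfold kk; fun_prop

lemma model_continuous (lam ρ α : ℝ) : Continuous (model lam ρ α) := by
  unfold model
  exact continuous_const.mul (sech_continuous.comp
    (continuous_const.mul (continuous_abs.sub continuous_const)))

lemma bb_continuousAt {lam ρ : ℝ} (hlam : 0 < lam) (hρ : 0 < ρ) :
    ContinuousAt (bb lam ρ) 0 := by
  have hm := mul_pos hlam hρ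
  unfold bb
  have h1 : ContinuousAt (fun α : ℝ => 2 / (lam * ρ + 2 * α)) 0 :=
    ContinuousAt.div continuousAt_const (by fun_prop)
      (ne_of_gt (by nlinarith : (0:ℝ) < lam * ρ + 2 * 0))
  have h2 : ContinuousAt (fun α : ℝ => lam * ρ / (lam * ρ + 4 * α)) 0 :=
    ContinuousAt.div continuousAt_const (by fun_prop)
      (ne_of_gt (by nlinarith : (0:ℝ) < lam * ρ + 4 * 0))
  have h3 : ContinuousAt (fun α : ℝ => Real.log (lam * ρ / (lam * ρ + 4 * α))) 0 :=
    h2.log (ne_of_gt (div_pos hm (by nlinarith)))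
  exact h1.mul h3

lemma cc_continuous (lam ρ : ℝ) : Continuous (cc lam ρ) := by
  unfold cc kk
  apply Real.continuous_sqrt.comp
  fun_prop

lemma theta_continuousAt {lam ρ : ℝ} (hlam : 0 < lam) (hρ : 0 < ρ) (x : ℝ) :
    ContinuousAt (fun α => kk lam ρ α * (|x| - bb lam ρ α)) 0 :=
  ((kk_continuous lam ρ).continuousAt).mul
    (continuousAt_const.sub (bb_continuousAt hlam hρ))

lemma model_continuousAt_alpha {lam ρ : ℝ} (hlam : 0 < lam) (hρ : 0 < ρ) (x : ℝ) :
    ContinuousAt (fun α => model lam ρ α x) 0 := by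
  unfold model
  exact ((cc_continuous lam ρ).continuousAt).mul
    (sech_continuous.continuousAt.comp (theta_continuousAt hlam hρ x))

lemma dmodel_continuousAt_alpha {lam ρ : ℝ} (hlam : 0 < lam) (hρ : 0 < ρ) (x : ℝ) :
    ContinuousAt (fun α => dmodel lam ρ α x) 0 := by
  unfold dmodel
  have hθ := theta_continuousAt hlam hρ x
  have hsinh : ContinuousAt (fun α => Real.sinh (kk lam ρ α * (|x| - bb lam ρ α))) 0 :=
    Real.continuous_sinh.continuousAt.comp hθ
  have hcosh : ContinuousAt (fun α => Real.cosh (kk lam ρ α * (|x| - bb lam ρ α)) ^ 2) 0 :=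
    (Real.continuous_cosh.continuousAt.comp hθ).pow 2
  have hne : Real.cosh (kk lam ρ 0 * (|x| - bb lam ρ 0)) ^ 2 ≠ 0 :=
    pow_ne_zero 2 (Real.cosh_pos _).ne'
  exact continuousAt_const.mul (((cc_continuous lam ρ).continuousAt).mul
    (((kk_continuous lam ρ).continuousAt).mul ((hsinh.div hcosh hne).neg)))

lemma model_zero_eq {lam ρ : ℝ} (hlam : 0 < lam) (hρ : 0 < ρ) (x : ℝ) :
    model lam ρ 0 x = Real.sqrt lam * ρ / (2 * Real.sqrt 2) * sech (lam * ρ / 4 * x) := by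
  have hk0 : kk lam ρ 0 = lam * ρ / 4 := by unfold kk; ring
  have hsl := Real.sq_sqrt hlam.le
  have hs2 := Real.sq_sqrt (by norm_num : (0:ℝ) ≤ 2)
  have hs2pos : (0:ℝ) < Real.sqrt 2 := Real.sqrt_pos.2 (by norm_num)
  have hslpos : (0:ℝ) < Real.sqrt lam := Real.sqrt_pos.2 hlam
  unfold model
  rw [bb_zero hlam hρ, hk0]
  have hc : cc lam ρ 0 = Real.sqrt lam * ρ / (2 * Real.sqrt 2) := by
    unfold cc
    rw [hk0]
    have hx2 : (Real.sqrt lam * ρ / (2 * Real.sqrt 2)) ^ 2 = 2 * (lam * ρ / 4) ^ 2 / lam := by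
      have hr : (Real.sqrt lam * ρ / (2 * Real.sqrt 2)) ^ 2
          = Real.sqrt lam ^ 2 * ρ ^ 2 / (2 ^ 2 * Real.sqrt 2 ^ 2) := by ring
      rw [hr, hsl, hs2]
      field_simp
      ring
    rw [← hx2, Real.sqrt_sq (by positivity)]
  rw [hc]
  congr 1
  have habs : lam * ρ / 4 * (|x| - 0) = |lam * ρ / 4 * x| := by
    rw [sub_zero, abs_mul, abs_of_pos (by positivity : (0:ℝ) < lam * ρ / 4)]
  rw [habs]
  unfold sech
  rw [Real.cosh_abs]

lemma integrable_exp_neg_abs {b : ℝ} (hb : 0 < b) :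
    Integrable (fun x : ℝ => Real.exp (-(b * |x|))) := by
  have h1 : IntegrableOn (fun x : ℝ => Real.exp (-(b * |x|))) (Ioi 0) := by
    refine (exp_neg_integrableOn_Ioi 0 hb).congr_fun ?_ measurableSet_Ioi
    intro x hx; simp [abs_of_pos (show (0:ℝ) < x from hx)]
  have h2 : IntegrableOn (fun x : ℝ => Real.exp (-(b * |x|))) (Iio 0) := by
    have := ((MeasureTheory.Measure.measurePreserving_neg
        (volume : Measure ℝ)).integrableOn_comp_preimage
      (s := Ioi (0:ℝ)) (MeasurableEquiv.neg ℝ).measurableEmbedding).2 h1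
    refine this.congr_set_ae ?_ |>.congr_fun ?_ measurableSet_Iio
    · have h : (Neg.neg ⁻¹' Ioi (0:ℝ)) = Iio 0 := by ext x; simp
      rw [h]
      exact EventuallyEq.rfl
    · intro x hx; simp
  have h3 : IntegrableOn (fun x : ℝ => Real.exp (-(b * |x|))) {0} :=
    (integrableOn_singleton_iff (by simp)).2 (Or.inr (by simp))
  have h4 := (h2.union h3).union h1
  rw [← integrableOn_univ]
  refine h4.mono_set ?_
  intro x _
  rcases lt_trichotomy x 0 with h|h|h
  · exact Or.inl (Or.inl h)
  · exact Or.inl (Or.inr (by simp [h]))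
  · exact Or.inr h

end NLSAux

open NLSAux in
/-- No-defect limit α → 0+ at fixed mass ρ of the ground state of the cubic NLS with an
attractive Dirac delta potential: φ_α converges in H¹(ℝ) to the free soliton of mass ρ. -/
theorem statement3 (lam ρ : ℝ) (hlam : 0 < lam) (hρ : 0 < ρ)
    (φ : ℝ → ℝ → ℝ)
    (hφ : ∀ α x, φ α x =
      Real.sqrt (2 * (lam * ρ / 4 + α / 2) ^ 2 / lam) *
        sech ((lam * ρ / 4 + α / 2) *
          (|x| - (2 / (lam * ρ + 2 * α)) * Real.log (lam * ρ / (lam * ρ + 4 * α)))))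
    (g : ℝ → ℝ)
    (hg : ∀ x, g x = (Real.sqrt lam * ρ / (2 * Real.sqrt 2)) * sech ((lam * ρ / 4) * x)) :
    Tendsto (fun α : ℝ =>
        (∫ x : ℝ, (φ α x - g x) ^ 2)
          + ∫ x in ({(0:ℝ)}ᶜ : Set ℝ), (deriv (φ α) x - deriv g x) ^ 2)
      (𝓝[>] 0) (𝓝 0) := by
  have hk0 : (0:ℝ) < lam * ρ / 4 := by positivity
  set C := cc lam ρ 1 with hCdef
  set K := kk lam ρ 1 with hKdef
  have hCpos : 0 ≤ C := cc_nonneg lam ρ 1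
  have hKpos : 0 < K := kk_pos hlam hρ zero_le_one
  have hφm : ∀ α, φ α = model lam ρ α := by
    intro α; funext x; rw [hφ α x]; rfl
  have hgm : g = model lam ρ 0 := by
    funext x; rw [hg x, model_zero_eq hlam hρ]
  have hIoo : Ioo (0:ℝ) 1 ∈ 𝓝[>] (0:ℝ) :=
    Ioo_mem_nhdsGT_of_mem ⟨le_refl 0, zero_lt_one⟩
  have hEsq : ∀ x : ℝ, Real.exp (-(lam * ρ / 4 * |x|)) * Real.exp (-(lam * ρ / 4 * |x|))
      = Real.exp (-(2 * (lam * ρ / 4) * |x|)) := by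
    intro x; rw [← Real.exp_add]; ring_nf
  -- first integral
  have T1 : Tendsto (fun α : ℝ => ∫ x : ℝ, (φ α x - g x) ^ 2) (𝓝[>] (0:ℝ)) (𝓝 0) := by
    have hrw : (fun α : ℝ => ∫ x : ℝ, (φ α x - g x) ^ 2)
        = fun α : ℝ => ∫ x : ℝ, (model lam ρ α x - model lam ρ 0 x) ^ 2 := by
      funext α; rw [hφm, hgm]
    rw [hrw]
    have h := tendsto_integral_filter_of_dominated_convergence
      (μ := (volume : Measure ℝ)) (l := 𝓝[>] (0:ℝ))
      (F := fun α x => (model lam ρ α x - model lam ρ 0 x) ^ 2)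
      (f := fun _ => (0:ℝ))
      (fun x => (4 * C) ^ 2 * Real.exp (-(2 * (lam * ρ / 4) * |x|)))
      (Eventually.of_forall (fun α =>
        (((model_continuous lam ρ α).sub (model_continuous lam ρ 0)).pow 2).aestronglyMeasurable))
      ?_ (((integrable_exp_neg_abs (by positivity)).const_mul ((4 * C) ^ 2)))
      ?_
    · simpa using h
    · filter_upwards [hIoo] with α hα
      refine Eventually.of_forall (fun x => ?_)
      set e := Real.exp (-(lam * ρ / 4 * |x|)) with hedef
      have hepos : 0 < e := Real.exp_pos _
      have hm1 : |model lam ρ α x| ≤ 2 * C * e := by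
        refine (model_bound hlam hρ hα.1.le x).trans ?_
        have := cc_mono hlam hρ hα.1.le hα.2.le (lam := lam) (ρ := ρ)
        nlinarith
      have hm0 : |model lam ρ 0 x| ≤ 2 * C * e := by
        refine (model_bound hlam hρ le_rfl x).trans ?_
        have := cc_mono hlam hρ le_rfl zero_le_one (lam := lam) (ρ := ρ)
        nlinarith
      have htri : |model lam ρ α x - model lam ρ 0 x| ≤ 4 * C * e := by
        have h1 : |model lam ρ α x - model lam ρ 0 x|
            ≤ |model lam ρ α x| + |model lam ρ 0 x| := abs_sub _ _
        linarith
      have hsq : (model lam ρ α x - model lam ρ 0 x) ^ 2 ≤ (4 * C * e) ^ 2 := by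
        rw [← sq_abs]
        exact pow_le_pow_left₀ (abs_nonneg _) htri 2
      rw [Real.norm_eq_abs, abs_of_nonneg (sq_nonneg _)]
      calc (model lam ρ α x - model lam ρ 0 x) ^ 2 ≤ (4 * C * e) ^ 2 := hsq
        _ = (4 * C) ^ 2 * (e * e) := by ring
        _ = (4 * C) ^ 2 * Real.exp (-(2 * (lam * ρ / 4) * |x|)) := by rw [hEsq x]
    · refine Eventually.of_forall (fun x => ?_)
      have hc : ContinuousAt (fun α => (model lam ρ α x - model lam ρ 0 x) ^ 2) 0 :=
        ((model_continuousAt_alpha hlam hρ x).sub continuousAt_const).pow 2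
      have := hc.tendsto.mono_left (nhdsWithin_le_nhds (s := Ioi (0:ℝ)))
      simpa using this
  -- second integral
  have hms : MeasurableSet ({(0:ℝ)}ᶜ : Set ℝ) := (measurableSet_singleton 0).compl
  have hae : ∀ᵐ x ∂(volume.restrict ({(0:ℝ)}ᶜ : Set ℝ)), x ≠ 0 := by
    filter_upwards [ae_restrict_mem hms] with x hx
    simpa using hx
  have hderiv : ∀ α (x : ℝ), x ≠ 0 → deriv (φ α) x = dmodel lam ρ α x := by
    intro α x hx; rw [hφm]; exact (hasDerivAt_model lam ρ α hx).deriv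
  have hderivg : ∀ x : ℝ, x ≠ 0 → deriv g x = dmodel lam ρ 0 x := by
    intro x hx; rw [hgm]; exact (hasDerivAt_model lam ρ 0 hx).deriv
  have T2 : Tendsto (fun α : ℝ =>
      ∫ x in ({(0:ℝ)}ᶜ : Set ℝ), (deriv (φ α) x - deriv g x) ^ 2) (𝓝[>] (0:ℝ)) (𝓝 0) := by
    have h := tendsto_integral_filter_of_dominated_convergence
      (μ := (volume : Measure ℝ).restrict ({(0:ℝ)}ᶜ : Set ℝ)) (l := 𝓝[>] (0:ℝ))
      (F := fun α x => (deriv (φ α) x - deriv g x) ^ 2)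
      (f := fun _ => (0:ℝ))
      (fun x => (4 * (C * K)) ^ 2 * Real.exp (-(2 * (lam * ρ / 4) * |x|)))
      (Eventually.of_forall (fun α =>
        ((((measurable_deriv (φ α)).sub (measurable_deriv g)).pow_const 2).aestronglyMeasurable)))
      ?_ (((integrable_exp_neg_abs (by positivity)).const_mul
        ((4 * (C * K)) ^ 2)).restrict)
      ?_
    · simpa using h
    · filter_upwards [hIoo] with α hα
      filter_upwards [hae] with x hx
      rw [hderiv α x hx, hderivg x hx]
      set e := Real.exp (-(lam * ρ / 4 * |x|)) with hedef
      have hepos : 0 < e := Real.exp_pos _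
      have hck : ∀ β : ℝ, 0 ≤ β → β ≤ 1 → cc lam ρ β * kk lam ρ β ≤ C * K := by
        intro β hβ hβ1
        exact mul_le_mul (cc_mono hlam hρ hβ hβ1) (kk_mono lam ρ hβ1)
          (kk_pos hlam hρ hβ).le hCpos
      have hm1 : |dmodel lam ρ α x| ≤ 2 * (C * K) * e := by
        refine (dmodel_bound hlam hρ hα.1.le x).trans ?_
        have := hck α hα.1.le hα.2.le
        nlinarith
      have hm0 : |dmodel lam ρ 0 x| ≤ 2 * (C * K) * e := by
        refine (dmodel_bound hlam hρ le_rfl x).trans ?_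
        have := hck 0 le_rfl zero_le_one
        nlinarith
      have htri : |dmodel lam ρ α x - dmodel lam ρ 0 x| ≤ 4 * (C * K) * e := by
        have h1 : |dmodel lam ρ α x - dmodel lam ρ 0 x|
            ≤ |dmodel lam ρ α x| + |dmodel lam ρ 0 x| := abs_sub _ _
        linarith
      have hsq : (dmodel lam ρ α x - dmodel lam ρ 0 x) ^ 2 ≤ (4 * (C * K) * e) ^ 2 := by
        rw [← sq_abs]
        exact pow_le_pow_left₀ (abs_nonneg _) htri 2
      rw [Real.norm_eq_abs, abs_of_nonneg (sq_nonneg _)]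
      calc (dmodel lam ρ α x - dmodel lam ρ 0 x) ^ 2 ≤ (4 * (C * K) * e) ^ 2 := hsq
        _ = (4 * (C * K)) ^ 2 * (e * e) := by ring
        _ = (4 * (C * K)) ^ 2 * Real.exp (-(2 * (lam * ρ / 4) * |x|)) := by rw [hEsq x]
    · filter_upwards [hae] with x hx
      have hfun : (fun α : ℝ => (deriv (φ α) x - deriv g x) ^ 2)
          = fun α : ℝ => (dmodel lam ρ α x - dmodel lam ρ 0 x) ^ 2 := by
        funext α; rw [hderiv α x hx, hderivg x hx]
      rw [hfun]
      have hc : ContinuousAt (fun α => (dmodel lam ρ α x - dmodel lam ρ 0 x) ^ 2) 0 :=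
        ((dmodel_continuousAt_alpha hlam hρ x).sub continuousAt_const).pow 2
      have := hc.tendsto.mono_left (nhdsWithin_le_nhds (s := Ioi (0:ℝ)))
      simpa using this
  have := T1.add T2
  simpa using this

end
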